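/- arXiv:2112.00135 — 3 statements merged into one kernel-verified Lean document; each statement's English description precedes it below -/
import Mathlib

section
/- Let F : D → ℝⁿ be a locally Lipschitz vector field on an open set D ⊆ ℝⁿ, and let R, R̃ : ℝⁿ → ℝⁿ be linear involutions preserving D that are reversing symmetries of F (R ∘ F = −F ∘ R and R̃ ∘ F = −F ∘ R̃ on D). Let u : ℝ → D solve u' = F(u) on ℝ, with R(u(0)) = u(0) and R̃(u(T₀)) = u(T₀) for some T₀ > 0. Then for every m ∈ ℤ and every t ∈ ℝ one has u(2mT₀ + t) = (R̃ ∘ R)ᵐ(u(t)). In particular, if (R̃ ∘ R)ᴹ = id for some positive integer M, then u is periodic with period 2MT₀, i.e. u(t + 2MT₀) = u(t) for all t ∈ ℝ. -/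
/- Orbits through fixed points of two reversing symmetries: translation by `2mT₀` acts as
`(R̃ ∘ R)ᵐ`, and periodicity when `(R̃ ∘ R)ᴹ = id`. -/

open Set Filter Topology

/-- Global uniqueness of ODE solutions for locally Lipschitz vector fields on an open set. -/
lemma ODE_uniq_aux {n : ℕ} {D : Set (Fin n → ℝ)} (hD : IsOpen D)
    {F : (Fin n → ℝ) → (Fin n → ℝ)}
    (hF : ∀ p ∈ D, ∃ K : NNReal, ∃ s ∈ nhdsWithin p D, LipschitzOnWith K F s)
    {f g : ℝ → (Fin n → ℝ)}
    (hfD : ∀ t, f t ∈ D) (hf : ∀ t, HasDerivAt f (F (f t)) t)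
    (hg : ∀ t, HasDerivAt g (F (g t)) t)
    {t₀ : ℝ} (heq : f t₀ = g t₀) : ∀ t, f t = g t := by
  set S : Set ℝ := {t | f t = g t} with hS
  have hScl : IsClosed S :=
    isClosed_eq (continuous_iff_continuousAt.mpr fun t => (hf t).continuousAt)
      (continuous_iff_continuousAt.mpr fun t => (hg t).continuousAt)
  have hSop : IsOpen S := by
    rw [isOpen_iff_mem_nhds]
    intro t ht
    obtain ⟨K, s, hs, hK⟩ := hF (f t) (hfD t)
    rw [nhdsWithin_eq_nhds.mpr (hD.mem_nhds (hfD t))] at hs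
    have hint : interior s ∈ 𝓝 (f t) :=
      isOpen_interior.mem_nhds (mem_interior_iff_mem_nhds.mpr hs)
    have hfev : ∀ᶠ τ in 𝓝 t, HasDerivAt f (F (f τ)) τ ∧ f τ ∈ interior s :=
      ((hf t).continuousAt.eventually_mem hint).mono fun τ hτ => ⟨hf τ, hτ⟩
    have hint' : interior s ∈ 𝓝 (g t) := ht ▸ hint
    have hgev : ∀ᶠ τ in 𝓝 t, HasDerivAt g (F (g τ)) τ ∧ g τ ∈ interior s :=
      ((hg t).continuousAt.eventually_mem hint').mono fun τ hτ => ⟨hg τ, hτ⟩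
    exact ODE_solution_unique_of_eventually (v := fun _ x => F x)
      (s := fun _ => interior s) (Eventually.of_forall fun _ => hK.mono interior_subset) hfev hgev ht
  have huniv : S = univ := IsClopen.eq_univ ⟨hScl, hSop⟩ ⟨t₀, heq⟩
  intro t
  exact (huniv ▸ mem_univ t : t ∈ S)

/-- Let `F : D → ℝⁿ` be a locally Lipschitz vector field on an open set `D ⊆ ℝⁿ`, and let
`R, R̃` be linear involutions preserving `D` that are reversing symmetries of `F`.
If `u : ℝ → D` solves `u' = F(u)` on `ℝ` with `R(u(0)) = u(0)` and `R̃(u(T₀)) = u(T₀)` for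
some `T₀ > 0`, then `u(2mT₀ + t) = (R̃ ∘ R)ᵐ(u(t))` for every `m ∈ ℤ` and `t ∈ ℝ`; in
particular, if `(R̃ ∘ R)ᴹ = id` for some positive integer `M`, then `u` is `2MT₀`-periodic.
(Here `R̃ ∘ R` is the linear automorphism `R' * R`, and integer powers are taken in the
automorphism group.) -/
theorem reversing_symmetries_periodic_orbit {n : ℕ}
    (D : Set (Fin n → ℝ)) (hD : IsOpen D)
    (F : (Fin n → ℝ) → (Fin n → ℝ))
    (hF : ∀ p ∈ D, ∃ K : NNReal, ∃ s ∈ nhdsWithin p D, LipschitzOnWith K F s)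
    (R R' : (Fin n → ℝ) ≃ₗ[ℝ] (Fin n → ℝ))
    (hRinv : ∀ p, R (R p) = p) (hR'inv : ∀ p, R' (R' p) = p)
    (hRD : R '' D = D) (hR'D : R' '' D = D)
    (hRrev : ∀ p ∈ D, R (F p) = -F (R p))
    (hR'rev : ∀ p ∈ D, R' (F p) = -F (R' p))
    (u : ℝ → (Fin n → ℝ))
    (hu : ∀ t : ℝ, u t ∈ D)
    (hode : ∀ t : ℝ, HasDerivAt u (F (u t)) t)
    (T₀ : ℝ) (hT₀ : 0 < T₀)
    (hfix0 : R (u 0) = u 0)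
    (hfixT : R' (u T₀) = u T₀) :
    (∀ m : ℤ, ∀ t : ℝ, u (2 * (m : ℝ) * T₀ + t) = ((R' * R) ^ m) (u t)) ∧
    (∀ M : ℕ, 0 < M → (R' * R) ^ (M : ℤ) = 1 →
      ∀ t : ℝ, u (t + 2 * (M : ℝ) * T₀) = u t) := by
  -- Step 1: a general symmetry principle.
  have hsymm : ∀ (S : (Fin n → ℝ) ≃ₗ[ℝ] (Fin n → ℝ)), S '' D = D →
      (∀ p ∈ D, S (F p) = -F (S p)) → ∀ c t₀ : ℝ, S (u (c - t₀)) = u t₀ →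
      ∀ t, u t = S (u (c - t)) := by
    intro S hSD hSrev c t₀ heq
    have hvD : ∀ t : ℝ, S (u (c - t)) ∈ D := fun t => hSD ▸ mem_image_of_mem S (hu (c - t))
    have hv : ∀ t : ℝ, HasDerivAt (fun τ => S (u (c - τ))) (F (S (u (c - t)))) t := by
      intro t
      have h1 : HasDerivAt (fun τ : ℝ => c - τ) (-1) t := (hasDerivAt_id t).const_sub c
      have h2 : HasDerivAt (fun τ => u (c - τ)) ((-1 : ℝ) • F (u (c - t))) t :=
        (hode (c - t)).scomp t h1
      have h3 := ((S.toLinearMap.toContinuousLinearMap).hasFDerivAt).comp_hasDerivAt t h2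
      have h4 : HasDerivAt (fun τ => S (u (c - τ))) (-S (F (u (c - t)))) t := by simpa [Function.comp_def] using h3
      rw [hSrev _ (hu (c - t)), neg_neg] at h4
      exact h4
    exact ODE_uniq_aux hD hF hu hode hv heq.symm
  have h1 : ∀ t : ℝ, u t = R (u (0 - t)) :=
    hsymm R hRD hRrev 0 0 (by simpa using hfix0)
  have h2 : ∀ t : ℝ, u t = R' (u (2 * T₀ - t)) :=
    hsymm R' hR'D hR'rev (2 * T₀) T₀ (by rw [show 2 * T₀ - T₀ = T₀ by ring]; exact hfixT)
  -- Step 2: the key translation identity.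
  have key : ∀ t : ℝ, u (2 * T₀ + t) = (R' * R) (u t) := by
    intro t
    calc u (2 * T₀ + t) = R' (u (2 * T₀ - (2 * T₀ + t))) := h2 _
      _ = R' (u (-t)) := by rw [show 2 * T₀ - (2 * T₀ + t) = -t by ring]
      _ = R' (R (u (0 - -t))) := by rw [← h1 (-t)]
      _ = (R' * R) (u t) := by rw [show (0 : ℝ) - -t = t by ring]; rfl
  have hmain : ∀ m : ℤ, ∀ t : ℝ, u (2 * (m : ℝ) * T₀ + t) = ((R' * R) ^ m) (u t) := by
    intro m
    induction m using Int.induction_on with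
    | zero => intro t; simp
    | succ k ih =>
      intro t
      have ih' := ih t
      push_cast at ih' ⊢
      rw [show 2 * ((k : ℝ) + 1) * T₀ + t = 2 * T₀ + (2 * (k : ℝ) * T₀ + t) by ring,
        key, ih']
      have hgrp : (R' * R) * (R' * R) ^ (k : ℤ) = (R' * R) ^ ((k : ℤ) + 1) := by
        rw [← zpow_one_add]; ring_nf
      rw [← hgrp]
      rfl
    | pred k ih =>
      intro t
      push_cast
      push_cast at ih
      have hk := key (2 * (-(k : ℝ) - 1) * T₀ + t)
      rw [show 2 * T₀ + (2 * (-(k : ℝ) - 1) * T₀ + t) = 2 * (-(k : ℝ)) * T₀ + t by ring] at hk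
      apply (R' * R).injective
      rw [← hk, ih t]
      have hgrp : (R' * R) * (R' * R) ^ (-(k : ℤ) - 1) = (R' * R) ^ (-(k : ℤ)) := by
        rw [← zpow_one_add]; ring_nf
      rw [← hgrp]
      rfl
  refine ⟨hmain, fun M hM hMid t => ?_⟩
  have h := hmain (M : ℤ) t
  rw [hMid] at h
  push_cast at h
  rw [add_comm t]
  simpa using h
end

section
/- For every μ ∈ (0, 1/2], the equilibrium points of the spatial Hill four-body problem are exactly four: the set of points (x,y,z) ∈ ℝ³∖{(0,0,0)} at which the gradient of Ω vanishes (equivalently, at which the vector field F vanishes together with zero velocity) is precisely { (λ₂^{−1/3}, 0, 0), (−λ₂^{−1/3}, 0, 0), (0, λ₁^{−1/3}, 0), (0, −λ₁^{−1/3}, 0) }. -/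
/- Spatial Hill four-body problem: vector field and (reversing) symmetries. -/

noncomputable section

/-- `d = √(1 − 3μ + 3μ²)`. -/
def dparam (μ : ℝ) : ℝ := Real.sqrt (1 - 3*μ + 3*μ^2)

/-- `λ₂ = (3/2)(1 + d)`. -/
def lam2 (μ : ℝ) : ℝ := (3/2) * (1 + dparam μ)

/-- `λ₁ = (3/2)(1 − d)`. -/
def lam1 (μ : ℝ) : ℝ := (3/2) * (1 - dparam μ)

/-- The effective potential `Ω(x,y,z) = (1/2)(λ₂x² + λ₁y² − z²) + 1/√(x²+y²+z²)`. -/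
def Omega (μ x y z : ℝ) : ℝ :=
  (1/2) * (lam2 μ * x^2 + lam1 μ * y^2 - z^2) + 1 / Real.sqrt (x^2 + y^2 + z^2)

/-- `∂Ω/∂x`. -/
def Omegax (μ x y z : ℝ) : ℝ := deriv (fun s => Omega μ s y z) x

/-- `∂Ω/∂y`. -/
def Omegay (μ x y z : ℝ) : ℝ := deriv (fun s => Omega μ x s z) y

/-- `∂Ω/∂z`. -/
def Omegaz (μ x y z : ℝ) : ℝ := deriv (fun s => Omega μ x y s) z


lemma Omegax_eq (μ x y z : ℝ) (hq : 0 < x^2+y^2+z^2) :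
    Omegax μ x y z = lam2 μ * x - x / ((x^2+y^2+z^2) * Real.sqrt (x^2+y^2+z^2)) := by
  set q := x^2+y^2+z^2 with hqdef
  have hsq : 0 < Real.sqrt q := Real.sqrt_pos.2 hq
  have h1 : HasDerivAt (fun s : ℝ => s^2) (2*x) x := by simpa using hasDerivAt_pow 2 x
  have hpoly : HasDerivAt (fun s => (1/2) * (lam2 μ * s^2 + lam1 μ * y^2 - z^2))
      ((1/2) * (lam2 μ * (2*x))) x :=
    (((h1.const_mul (lam2 μ)).add_const _).sub_const _).const_mul _
  have hqd : HasDerivAt (fun s : ℝ => s^2 + y^2 + z^2) (2*x) x :=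
    (h1.add_const _).add_const _
  have hs : HasDerivAt (fun s : ℝ => Real.sqrt (s^2 + y^2 + z^2))
      (1/(2*Real.sqrt q) * (2*x)) x := (Real.hasDerivAt_sqrt hq.ne').comp x hqd
  have hinv : HasDerivAt (fun s : ℝ => (Real.sqrt (s^2 + y^2 + z^2))⁻¹)
      (-(1/(2*Real.sqrt q) * (2*x)) / (Real.sqrt q)^2) x := hs.inv hsq.ne'
  have htot : HasDerivAt (fun s => Omega μ s y z)
      ((1/2) * (lam2 μ * (2*x)) + -(1/(2*Real.sqrt q) * (2*x)) / (Real.sqrt q)^2) x := by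
    simpa [Omega, one_div, Pi.add_def] using hpoly.add hinv
  rw [Omegax, htot.deriv]
  have hss : Real.sqrt q * Real.sqrt q = q := Real.mul_self_sqrt hq.le
  field_simp
  ring_nf
  rw [Real.sq_sqrt hq.le]



lemma Omegay_eq (μ x y z : ℝ) (hq : 0 < x^2+y^2+z^2) :
    Omegay μ x y z = lam1 μ * y - y / ((x^2+y^2+z^2) * Real.sqrt (x^2+y^2+z^2)) := by
  set q := x^2+y^2+z^2 with hqdef
  have hsq : 0 < Real.sqrt q := Real.sqrt_pos.2 hq
  have h1 : HasDerivAt (fun s : ℝ => s^2) (2*y) y := by simpa using hasDerivAt_pow 2 y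
  have hpoly : HasDerivAt (fun s => (1/2) * (lam2 μ * x^2 + lam1 μ * s^2 - z^2))
      ((1/2) * (lam1 μ * (2*y))) y :=
    (((h1.const_mul (lam1 μ)).const_add _).sub_const _).const_mul _
  have hqd : HasDerivAt (fun s : ℝ => x^2 + s^2 + z^2) (2*y) y :=
    ((h1.const_add _).add_const _)
  have hs : HasDerivAt (fun s : ℝ => Real.sqrt (x^2 + s^2 + z^2))
      (1/(2*Real.sqrt q) * (2*y)) y := (Real.hasDerivAt_sqrt hq.ne').comp y hqd
  have hinv : HasDerivAt (fun s : ℝ => (Real.sqrt (x^2 + s^2 + z^2))⁻¹)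
      (-(1/(2*Real.sqrt q) * (2*y)) / (Real.sqrt q)^2) y := hs.inv hsq.ne'
  have htot : HasDerivAt (fun s => Omega μ x s z)
      ((1/2) * (lam1 μ * (2*y)) + -(1/(2*Real.sqrt q) * (2*y)) / (Real.sqrt q)^2) y := by
    simpa [Omega, one_div, Pi.add_def] using hpoly.add hinv
  rw [Omegay, htot.deriv]
  have hss : Real.sqrt q * Real.sqrt q = q := Real.mul_self_sqrt hq.le
  field_simp
  ring_nf
  rw [Real.sq_sqrt hq.le]

lemma Omegaz_eq (μ x y z : ℝ) (hq : 0 < x^2+y^2+z^2) :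
    Omegaz μ x y z = -z - z / ((x^2+y^2+z^2) * Real.sqrt (x^2+y^2+z^2)) := by
  set q := x^2+y^2+z^2 with hqdef
  have hsq : 0 < Real.sqrt q := Real.sqrt_pos.2 hq
  have h1 : HasDerivAt (fun s : ℝ => s^2) (2*z) z := by simpa using hasDerivAt_pow 2 z
  have hpoly : HasDerivAt (fun s => (1/2) * (lam2 μ * x^2 + lam1 μ * y^2 - s^2))
      ((1/2) * (-(2*z))) z := ((h1.const_sub _).const_mul _)
  have hqd : HasDerivAt (fun s : ℝ => x^2 + y^2 + s^2) (2*z) z := (h1.const_add _)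
  have hs : HasDerivAt (fun s : ℝ => Real.sqrt (x^2 + y^2 + s^2))
      (1/(2*Real.sqrt q) * (2*z)) z := (Real.hasDerivAt_sqrt hq.ne').comp z hqd
  have hinv : HasDerivAt (fun s : ℝ => (Real.sqrt (x^2 + y^2 + s^2))⁻¹)
      (-(1/(2*Real.sqrt q) * (2*z)) / (Real.sqrt q)^2) z := hs.inv hsq.ne'
  have htot : HasDerivAt (fun s => Omega μ x y s)
      ((1/2) * (-(2*z)) + -(1/(2*Real.sqrt q) * (2*z)) / (Real.sqrt q)^2) z := by
    simpa [Omega, one_div, sub_eq_add_neg, Pi.add_def] using hpoly.add hinv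
  rw [Omegaz, htot.deriv]
  have hss : Real.sqrt q * Real.sqrt q = q := Real.mul_self_sqrt hq.le
  field_simp
  ring_nf
  rw [Real.sq_sqrt hq.le]; ring

lemma dparam_pos (μ : ℝ) : 0 < dparam μ := by
  have : (0:ℝ) < 1 - 3*μ + 3*μ^2 := by nlinarith [sq_nonneg (2*μ - 1)]
  exact Real.sqrt_pos.2 this

lemma dparam_lt_one {μ : ℝ} (hμ : μ ∈ Set.Ioc (0:ℝ) (1/2)) : dparam μ < 1 := by
  obtain ⟨h0, h1⟩ := hμ
  have harg : 1 - 3*μ + 3*μ^2 < 1 := by nlinarith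
  have h2 : Real.sqrt (1 - 3*μ + 3*μ^2) < Real.sqrt 1 :=
    Real.sqrt_lt_sqrt (by nlinarith [sq_nonneg (2*μ-1)]) harg
  simpa [dparam] using h2

lemma lam2_pos (μ : ℝ) : 0 < lam2 μ := by
  have := dparam_pos μ; unfold lam2; nlinarith

lemma lam1_pos {μ : ℝ} (hμ : μ ∈ Set.Ioc (0:ℝ) (1/2)) : 0 < lam1 μ := by
  have := dparam_lt_one hμ; unfold lam1; nlinarith


lemma cube_rpow {t : ℝ} (ht : 0 < t) : (t ^ (-(1:ℝ)/3))^3 = t⁻¹ := by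
  rw [← Real.rpow_natCast (t ^ (-(1:ℝ)/3)) 3, ← Real.rpow_mul ht.le]
  norm_num [Real.rpow_neg_one]

lemma cube_inj {a b : ℝ} (ha : 0 ≤ a) (hb : 0 < b) (h : a^3 = b^3) : a = b := by
  have h2 : (a - b) * (a^2 + a*b + b^2) = 0 := by linear_combination h
  have h3 : 0 < a^2 + a*b + b^2 := by positivity
  rcases mul_eq_zero.1 h2 with h4 | h4
  · linarith
  · linarith

lemma factor_zero {L R' c : ℝ} (hR : R' ≠ 0) (h : L * c - c / R' = 0) :
    c = 0 ∨ L * R' = 1 := by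
  have h3 : L * c = c / R' := by linarith
  have h2 : c * (L * R' - 1) = 0 := by
    calc c * (L * R' - 1) = (L * c) * R' - c := by ring
      _ = (c / R') * R' - c := by rw [h3]
      _ = 0 := by rw [div_mul_cancel₀ c hR]; ring
  rcases mul_eq_zero.1 h2 with h4 | h4
  · exact Or.inl h4
  · exact Or.inr (by linarith)

set_option maxHeartbeats 1000000 in
/-- For every `μ ∈ (0, 1/2]`, the equilibrium points of the spatial Hill four-body problem
are exactly four: the set of points of `ℝ³ ∖ {0}` at which the gradient of `Ω` vanishes is
precisely `{(λ₂^{−1/3},0,0), (−λ₂^{−1/3},0,0), (0,λ₁^{−1/3},0), (0,−λ₁^{−1/3},0)}`. -/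
theorem equilibrium_points (μ : ℝ) (hμ : μ ∈ Set.Ioc (0:ℝ) (1/2)) :
    {p : ℝ × ℝ × ℝ | p ≠ (0, 0, 0) ∧
        Omegax μ p.1 p.2.1 p.2.2 = 0 ∧
        Omegay μ p.1 p.2.1 p.2.2 = 0 ∧
        Omegaz μ p.1 p.2.1 p.2.2 = 0}
      = ({(lam2 μ ^ (-(1:ℝ)/3), 0, 0), (-(lam2 μ ^ (-(1:ℝ)/3)), 0, 0),
          (0, lam1 μ ^ (-(1:ℝ)/3), 0), (0, -(lam1 μ ^ (-(1:ℝ)/3)), 0)} : Set (ℝ × ℝ × ℝ)) := by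
  have hl2 : 0 < lam2 μ := lam2_pos μ
  have hl1 : 0 < lam1 μ := lam1_pos hμ
  have hd : 0 < dparam μ := dparam_pos μ
  have hne12 : lam1 μ < lam2 μ := by unfold lam1 lam2; nlinarith
  set a := lam2 μ ^ (-(1:ℝ)/3) with hadef
  set b := lam1 μ ^ (-(1:ℝ)/3) with hbdef
  have hapos : 0 < a := Real.rpow_pos_of_pos hl2 _
  have hbpos : 0 < b := Real.rpow_pos_of_pos hl1 _
  have ha3 : a^3 = (lam2 μ)⁻¹ := cube_rpow hl2
  have hb3 : b^3 = (lam1 μ)⁻¹ := cube_rpow hl1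
  ext ⟨x, y, z⟩
  simp only [Set.mem_setOf_eq, Set.mem_insert_iff, Set.mem_singleton_iff, Prod.mk.injEq,
    ne_eq, Prod.ext_iff]
  constructor
  · rintro ⟨hp, hx, hy, hz⟩
    have hq : 0 < x^2 + y^2 + z^2 := by
      rcases lt_or_eq_of_le (by positivity : (0:ℝ) ≤ x^2+y^2+z^2) with h | h
      · exact h
      · exact absurd ⟨by nlinarith [sq_nonneg x, sq_nonneg y, sq_nonneg z],
          by nlinarith [sq_nonneg x, sq_nonneg y, sq_nonneg z],
          by nlinarith [sq_nonneg x, sq_nonneg y, sq_nonneg z]⟩ hp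
    rw [Omegax_eq μ x y z hq] at hx
    rw [Omegay_eq μ x y z hq] at hy
    rw [Omegaz_eq μ x y z hq] at hz
    set q := x^2 + y^2 + z^2 with hqdef
    have hsq : 0 < Real.sqrt q := Real.sqrt_pos.2 hq
    set R := q * Real.sqrt q with hRdef
    have hR : 0 < R := by positivity
    have hz' : (-1) * z - z / R = 0 := by linarith
    have hz0 : z = 0 := by
      rcases factor_zero hR.ne' hz' with h | h
      · exact h
      · nlinarith
    subst hz0
    by_cases hx0 : x = 0
    · have hy0 : y ≠ 0 := fun h => hp ⟨hx0, h, rfl⟩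
      rcases factor_zero hR.ne' hy with h | h
      · exact absurd h hy0
      have hRval2 : R = 1 / lam1 μ := (eq_div_iff hl1.ne').2 (by linarith)
      have hqval : q = y^2 := by rw [hqdef, hx0]; ring
      have hRval : R = |y|^3 := by
        rw [hRdef, hqval, Real.sqrt_sq_eq_abs, ← sq_abs]; ring
      have hcube : |y|^3 = b^3 := by rw [← hRval, hRval2, hb3, one_div]
      rcases (abs_eq hbpos.le).1 (cube_inj (abs_nonneg y) hbpos hcube) with h' | h'
      · exact Or.inr (Or.inr (Or.inl ⟨hx0, h', rfl⟩))
      · exact Or.inr (Or.inr (Or.inr ⟨hx0, h', rfl⟩))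
    · rcases factor_zero hR.ne' hx with h | h
      · exact absurd h hx0
      have hy0 : y = 0 := by
        by_contra hy0
        rcases factor_zero hR.ne' hy with h2 | h2
        · exact hy0 h2
        · nlinarith
      subst hy0
      have hRval2 : R = 1 / lam2 μ := (eq_div_iff hl2.ne').2 (by linarith)
      have hqval : q = x^2 := by rw [hqdef]; ring
      have hRval : R = |x|^3 := by
        rw [hRdef, hqval, Real.sqrt_sq_eq_abs, ← sq_abs]; ring
      have hcube : |x|^3 = a^3 := by rw [← hRval, hRval2, ha3, one_div]
      rcases (abs_eq hapos.le).1 (cube_inj (abs_nonneg x) hapos hcube) with h' | h'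
      · exact Or.inl ⟨h', rfl, rfl⟩
      · exact Or.inr (Or.inl ⟨h', rfl, rfl⟩)
  · intro h
    rcases h with ⟨h1, h2, h3⟩ | ⟨h1, h2, h3⟩ | ⟨h1, h2, h3⟩ | ⟨h1, h2, h3⟩ <;>
        subst h1 <;> subst h2 <;> subst h3
    · have hq : 0 < a^2 + (0:ℝ)^2 + (0:ℝ)^2 := by positivity
      have hsr : Real.sqrt (a^2 + (0:ℝ)^2 + (0:ℝ)^2) = a := by
        rw [show a^2 + (0:ℝ)^2 + (0:ℝ)^2 = a^2 by ring, Real.sqrt_sq hapos.le]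
      refine ⟨fun hc => by simpa [hapos.ne'] using hc.1, ?_, ?_, ?_⟩
      · rw [Omegax_eq μ a 0 0 hq, hsr,
          show (a^2 + (0:ℝ)^2 + (0:ℝ)^2) * a = a^3 by ring, ha3]; field_simp; ring
      · rw [Omegay_eq μ a 0 0 hq]; simp
      · rw [Omegaz_eq μ a 0 0 hq]; simp
    · have hq : 0 < (-a)^2 + (0:ℝ)^2 + (0:ℝ)^2 := by nlinarith
      have hsr : Real.sqrt ((-a)^2 + (0:ℝ)^2 + (0:ℝ)^2) = a := by
        rw [show (-a)^2 + (0:ℝ)^2 + (0:ℝ)^2 = a^2 by ring, Real.sqrt_sq hapos.le]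
      refine ⟨fun hc => by simpa [hapos.ne'] using hc.1, ?_, ?_, ?_⟩
      · rw [Omegax_eq μ (-a) 0 0 hq, hsr,
          show ((-a)^2 + (0:ℝ)^2 + (0:ℝ)^2) * a = a^3 by ring, ha3]; field_simp; ring
      · rw [Omegay_eq μ (-a) 0 0 hq]; simp
      · rw [Omegaz_eq μ (-a) 0 0 hq]; simp
    · have hq : 0 < (0:ℝ)^2 + b^2 + (0:ℝ)^2 := by positivity
      have hsr : Real.sqrt ((0:ℝ)^2 + b^2 + (0:ℝ)^2) = b := by
        rw [show (0:ℝ)^2 + b^2 + (0:ℝ)^2 = b^2 by ring, Real.sqrt_sq hbpos.le]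
      refine ⟨fun hc => by simpa [hbpos.ne'] using hc.2.1, ?_, ?_, ?_⟩
      · rw [Omegax_eq μ 0 b 0 hq]; simp
      · rw [Omegay_eq μ 0 b 0 hq, hsr,
          show ((0:ℝ)^2 + b^2 + (0:ℝ)^2) * b = b^3 by ring, hb3]; field_simp; ring
      · rw [Omegaz_eq μ 0 b 0 hq]; simp
    · have hq : 0 < (0:ℝ)^2 + (-b)^2 + (0:ℝ)^2 := by nlinarith
      have hsr : Real.sqrt ((0:ℝ)^2 + (-b)^2 + (0:ℝ)^2) = b := by
        rw [show (0:ℝ)^2 + (-b)^2 + (0:ℝ)^2 = b^2 by ring, Real.sqrt_sq hbpos.le]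
      refine ⟨fun hc => by simpa [hbpos.ne'] using hc.2.1, ?_, ?_, ?_⟩
      · rw [Omegax_eq μ 0 (-b) 0 hq]; simp
      · rw [Omegay_eq μ 0 (-b) 0 hq, hsr,
          show ((0:ℝ)^2 + (-b)^2 + (0:ℝ)^2) * b = b^3 by ring, hb3]; field_simp; ring
      · rw [Omegaz_eq μ 0 (-b) 0 hq]; simp

end
end

section
/- For every μ ∈ [0,1/2] the equilibrium points L₁ = (λ₂^{−1/3},0,0) and L₂ = (−λ₂^{−1/3},0,0) are of saddle × center type in the plane: at L₁ one has Ω_xx = 3λ₂, Ω_yy = λ₁ − λ₂, Ω_xy = 0, and setting A = 4 − 2λ₂ − λ₁, B = 3λ₂(λ₁ − λ₂), D = A² − 4B, one has B < 0 and D > A² ≥ 0, and the planar characteristic polynomial η⁴ − (Ω_xx + Ω_yy − 4)η² + Ω_xx Ω_yy = η⁴ − (2λ₂ + λ₁ − 4)η² + 3λ₂(λ₁ − λ₂) has, over ℂ, exactly the roots {Λ, −Λ, iω, −iω}, where Λ = √((√D − A)/2) > 0 and ω = √((A + √D)/2) > 0. -/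
/- Spatial Hill four-body problem: vector field and (reversing) symmetries. -/

noncomputable section

/-- `Ω_xx`. -/
def Omegaxx (μ x y z : ℝ) : ℝ := deriv (fun s => Omegax μ s y z) x

/-- `Ω_yy`. -/
def Omegayy (μ x y z : ℝ) : ℝ := deriv (fun s => Omegay μ x s z) y

/-- `Ω_xy`. -/
def Omegaxy (μ x y z : ℝ) : ℝ := deriv (fun s => Omegax μ x s z) y

/-- `A = 4 − 2λ₂ − λ₁`. -/
def Acoef (μ : ℝ) : ℝ := 4 - 2 * lam2 μ - lam1 μ

/-- `B = 3λ₂(λ₁ − λ₂)`. -/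
def Bcoef (μ : ℝ) : ℝ := 3 * lam2 μ * (lam1 μ - lam2 μ)

/-- `D = A² − 4B`. -/
def Dcoef (μ : ℝ) : ℝ := (Acoef μ)^2 - 4 * Bcoef μ

/-- `Λ = √((√D − A)/2)`. -/
def LambdaL1 (μ : ℝ) : ℝ := Real.sqrt ((Real.sqrt (Dcoef μ) - Acoef μ) / 2)

/-- `ω = √((A + √D)/2)`. -/
def omegaL1 (μ : ℝ) : ℝ := Real.sqrt ((Acoef μ + Real.sqrt (Dcoef μ)) / 2)

lemma hasDerivAt_omega_x (μ y z x : ℝ) (h : 0 < x^2 + y^2 + z^2) :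
    HasDerivAt (fun s => Omega μ s y z)
      (lam2 μ * x - x / Real.sqrt (x^2 + y^2 + z^2) ^ 3) x := by
  have hs : 0 < Real.sqrt (x^2 + y^2 + z^2) := Real.sqrt_pos.mpr h
  have hu : HasDerivAt (fun s : ℝ => s^2 + y^2 + z^2) (2*x) x := by
    have h1 := (hasDerivAt_pow 2 x).add_const (y^2 + z^2)
    have hf : (fun s : ℝ => s^2 + (y^2 + z^2)) = fun s => s^2 + y^2 + z^2 := by
      funext s; ring
    rw [hf] at h1
    simpa using h1
  have hsq : HasDerivAt (fun s => Real.sqrt (s^2 + y^2 + z^2))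
      (x / Real.sqrt (x^2 + y^2 + z^2)) x := by
    have h2 := (Real.hasDerivAt_sqrt (ne_of_gt h)).comp x hu
    have he : 1 / (2 * Real.sqrt (x^2 + y^2 + z^2)) * (2*x)
        = x / Real.sqrt (x^2 + y^2 + z^2) := by
      field_simp
    rw [he] at h2
    exact h2
  have hinv : HasDerivAt (fun s => (Real.sqrt (s^2 + y^2 + z^2))⁻¹)
      (-(x / Real.sqrt (x^2 + y^2 + z^2) ^ 3)) x := by
    have h3 := hsq.inv hs.ne'
    have he : -(x / Real.sqrt (x^2+y^2+z^2)) / Real.sqrt (x^2+y^2+z^2) ^ 2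
        = -(x / Real.sqrt (x^2+y^2+z^2) ^ 3) := by
      ring
    rw [he] at h3
    exact h3
  have hp : HasDerivAt (fun s : ℝ => (1/2) * (lam2 μ * s^2 + lam1 μ * y^2 - z^2))
      (lam2 μ * x) x := by
    have h4 := ((((hasDerivAt_pow 2 x).const_mul (lam2 μ)).add_const
      (lam1 μ * y^2)).sub_const (z^2)).const_mul (1/2)
    have he : (1/2 : ℝ) * (lam2 μ * (((2:ℕ):ℝ) * x ^ (2-1))) = lam2 μ * x := by
      push_cast; ring
    rw [he] at h4
    exact h4
  have H := hp.add hinv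
  have he : lam2 μ * x + -(x / Real.sqrt (x^2+y^2+z^2) ^ 3)
      = lam2 μ * x - x / Real.sqrt (x^2+y^2+z^2) ^ 3 := by ring
  rw [he] at H
  have hf : (fun s => (1/2 : ℝ) * (lam2 μ * s^2 + lam1 μ * y^2 - z^2)
      + (Real.sqrt (s^2 + y^2 + z^2))⁻¹) = fun s => Omega μ s y z := by
    funext s; rw [Omega]; ring
  rw [← hf]; exact H

lemma omegax_eq (μ y z x : ℝ) (h : 0 < x^2 + y^2 + z^2) :
    Omegax μ x y z = lam2 μ * x - x / Real.sqrt (x^2 + y^2 + z^2) ^ 3 :=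
  (hasDerivAt_omega_x μ y z x h).deriv

lemma hasDerivAt_omega_y (μ x z y : ℝ) (h : 0 < x^2 + y^2 + z^2) :
    HasDerivAt (fun s => Omega μ x s z)
      (lam1 μ * y - y / Real.sqrt (x^2 + y^2 + z^2) ^ 3) y := by
  have hs : 0 < Real.sqrt (x^2 + y^2 + z^2) := Real.sqrt_pos.mpr h
  have hu : HasDerivAt (fun s : ℝ => x^2 + s^2 + z^2) (2*y) y := by
    have h1 := (((hasDerivAt_pow 2 y).const_add (x^2)).add_const (z^2))
    simpa using h1
  have hsq : HasDerivAt (fun s => Real.sqrt (x^2 + s^2 + z^2))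
      (y / Real.sqrt (x^2 + y^2 + z^2)) y := by
    have h2 := (Real.hasDerivAt_sqrt (ne_of_gt h)).comp y hu
    have he : 1 / (2 * Real.sqrt (x^2 + y^2 + z^2)) * (2*y)
        = y / Real.sqrt (x^2 + y^2 + z^2) := by
      field_simp
    rw [he] at h2
    exact h2
  have hinv : HasDerivAt (fun s => (Real.sqrt (x^2 + s^2 + z^2))⁻¹)
      (-(y / Real.sqrt (x^2 + y^2 + z^2) ^ 3)) y := by
    have h3 := hsq.inv hs.ne'
    have he : -(y / Real.sqrt (x^2+y^2+z^2)) / Real.sqrt (x^2+y^2+z^2) ^ 2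
        = -(y / Real.sqrt (x^2+y^2+z^2) ^ 3) := by
      ring
    rw [he] at h3
    exact h3
  have hp : HasDerivAt (fun s : ℝ => (1/2) * (lam2 μ * x^2 + lam1 μ * s^2 - z^2))
      (lam1 μ * y) y := by
    have h4 := ((((hasDerivAt_pow 2 y).const_mul (lam1 μ)).const_add
      (lam2 μ * x^2)).sub_const (z^2)).const_mul (1/2)
    have he : (1/2 : ℝ) * (lam1 μ * (((2:ℕ):ℝ) * y ^ (2-1))) = lam1 μ * y := by
      push_cast; ring
    rw [he] at h4
    exact h4
  have H := hp.add hinv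
  have he : lam1 μ * y + -(y / Real.sqrt (x^2+y^2+z^2) ^ 3)
      = lam1 μ * y - y / Real.sqrt (x^2+y^2+z^2) ^ 3 := by ring
  rw [he] at H
  have hf : (fun s => (1/2 : ℝ) * (lam2 μ * x^2 + lam1 μ * s^2 - z^2)
      + (Real.sqrt (x^2 + s^2 + z^2))⁻¹) = fun s => Omega μ x s z := by
    funext s; rw [Omega]; ring
  rw [← hf]; exact H

lemma omegay_eq (μ x z y : ℝ) (h : 0 < x^2 + y^2 + z^2) :
    Omegay μ x y z = lam1 μ * y - y / Real.sqrt (x^2 + y^2 + z^2) ^ 3 :=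
  (hasDerivAt_omega_y μ x z y h).deriv

lemma omegaxx_pos (μ x0 : ℝ) (hx : 0 < x0) :
    Omegaxx μ x0 0 0 = lam2 μ + 2 / x0 ^ 3 := by
  have hev : (fun s => Omegax μ s 0 0) =ᶠ[nhds x0] fun s => lam2 μ * s - (s^2)⁻¹ := by
    filter_upwards [eventually_gt_nhds hx] with s hs
    have hs' : s ≠ 0 := hs.ne'
    rw [omegax_eq μ 0 0 s (by positivity)]
    rw [show s^2 + 0^2 + 0^2 = s^2 by ring, Real.sqrt_sq hs.le]
    field_simp
  have h2 : HasDerivAt (fun s : ℝ => (s^2)⁻¹) (-(((2:ℕ):ℝ) * x0 ^ (2-1)) / (x0^2)^2) x0 :=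
    (hasDerivAt_pow 2 x0).inv (pow_ne_zero 2 hx.ne')
  have h1 : HasDerivAt (fun s : ℝ => lam2 μ * s) (lam2 μ * 1) x0 :=
    (hasDerivAt_id x0).const_mul (lam2 μ)
  have h3 := h1.sub h2
  have he : lam2 μ * 1 - -(((2:ℕ):ℝ) * x0 ^ (2-1)) / (x0^2)^2 = lam2 μ + 2 / x0 ^ 3 := by
    have hx' : x0 ≠ 0 := hx.ne'
    field_simp
    ring
  rw [he] at h3
  rw [Omegaxx, hev.deriv_eq]; exact h3.deriv

lemma omegaxx_neg (μ x0 : ℝ) (hx : 0 < x0) :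
    Omegaxx μ (-x0) 0 0 = lam2 μ + 2 / x0 ^ 3 := by
  have hev : (fun s => Omegax μ s 0 0) =ᶠ[nhds (-x0)] fun s => lam2 μ * s + (s^2)⁻¹ := by
    filter_upwards [eventually_lt_nhds (by linarith : -x0 < (0:ℝ))] with s hs
    have hs' : s ≠ 0 := hs.ne
    rw [omegax_eq μ 0 0 s (by positivity)]
    rw [show s^2 + 0^2 + 0^2 = s^2 by ring, Real.sqrt_sq_eq_abs, abs_of_neg hs]
    have h8 : s / (-s)^3 = -(s^2)⁻¹ := by
      rw [show ((-s):ℝ)^3 = -(s^3) by ring, div_neg, neg_inj,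
        div_eq_iff (pow_ne_zero 3 hs')]
      field_simp
    rw [h8]
    ring
  have h2 : HasDerivAt (fun s : ℝ => (s^2)⁻¹) (-(((2:ℕ):ℝ) * (-x0) ^ (2-1)) / ((-x0)^2)^2) (-x0) :=
    (hasDerivAt_pow 2 (-x0)).inv (pow_ne_zero 2 (neg_ne_zero.mpr hx.ne'))
  have h1 : HasDerivAt (fun s : ℝ => lam2 μ * s) (lam2 μ * 1) (-x0) :=
    (hasDerivAt_id (-x0)).const_mul (lam2 μ)
  have h3 := h1.add h2
  have he : lam2 μ * 1 + -(((2:ℕ):ℝ) * (-x0) ^ (2-1)) / ((-x0)^2)^2 = lam2 μ + 2 / x0 ^ 3 := by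
    have hx' : x0 ≠ 0 := hx.ne'
    field_simp
    ring
  rw [he] at h3
  rw [Omegaxx, hev.deriv_eq]; exact h3.deriv

lemma cube_sqrt_hasDerivAt (x0 : ℝ) (hx : x0 ≠ 0) :
    HasDerivAt (fun s : ℝ => Real.sqrt (x0^2 + s^2 + 0^2) ^ 3) 0 0 := by
  have h0 : (0:ℝ) < x0^2 + 0^2 + 0^2 := by positivity
  have hu : HasDerivAt (fun s : ℝ => x0^2 + s^2 + 0^2) 0 (0:ℝ) := by
    have h1 := (((hasDerivAt_pow 2 (0:ℝ)).const_add (x0^2)).add_const ((0:ℝ)^2))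
    simpa using h1
  have hsq := (Real.hasDerivAt_sqrt (ne_of_gt h0)).comp 0 hu
  have hcube := hsq.pow 3
  simp only [mul_zero] at hcube; exact hcube

lemma omegayy_axis (μ x0 : ℝ) (hx : x0 ≠ 0) :
    Omegayy μ x0 0 0 = lam1 μ - (Real.sqrt (x0^2 + 0^2 + 0^2) ^ 3)⁻¹ := by
  have hfun : (fun s => Omegay μ x0 s 0)
      = fun s => lam1 μ * s - s / Real.sqrt (x0^2 + s^2 + 0^2) ^ 3 := by
    funext s; exact omegay_eq μ x0 0 s (by positivity)
  have hc := cube_sqrt_hasDerivAt x0 hx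
  have hg0 : Real.sqrt (x0^2 + 0^2 + 0^2) ^ 3 ≠ 0 := by
    have : (0:ℝ) < Real.sqrt (x0^2 + 0^2 + 0^2) := Real.sqrt_pos.mpr (by positivity)
    positivity
  have hdiv : HasDerivAt (fun s : ℝ => s / Real.sqrt (x0^2 + s^2 + 0^2) ^ 3)
      ((1 * Real.sqrt (x0^2 + (0:ℝ)^2 + 0^2) ^ 3 - (0:ℝ) * 0)
        / (Real.sqrt (x0^2 + (0:ℝ)^2 + 0^2) ^ 3)^2) 0 :=
    (hasDerivAt_id (0:ℝ)).div hc hg0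
  have h1 : HasDerivAt (fun s : ℝ => lam1 μ * s) (lam1 μ * 1) (0:ℝ) :=
    (hasDerivAt_id (0:ℝ)).const_mul (lam1 μ)
  have h3 := h1.sub hdiv
  have he : lam1 μ * 1 - (1 * Real.sqrt (x0^2 + (0:ℝ)^2 + 0^2) ^ 3 - (0:ℝ) * 0)
        / (Real.sqrt (x0^2 + (0:ℝ)^2 + 0^2) ^ 3)^2
      = lam1 μ - (Real.sqrt (x0^2 + 0^2 + 0^2) ^ 3)⁻¹ := by
    field_simp
    ring
  rw [he] at h3
  rw [Omegayy, hfun]; exact h3.deriv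

lemma omegaxy_axis (μ x0 : ℝ) (hx : x0 ≠ 0) :
    Omegaxy μ x0 0 0 = 0 := by
  have hfun : (fun s => Omegax μ x0 s 0)
      = fun s => lam2 μ * x0 - x0 / Real.sqrt (x0^2 + s^2 + 0^2) ^ 3 := by
    funext s; exact omegax_eq μ s 0 x0 (by positivity)
  have hc := cube_sqrt_hasDerivAt x0 hx
  have hg0 : Real.sqrt (x0^2 + 0^2 + 0^2) ^ 3 ≠ 0 := by
    have : (0:ℝ) < Real.sqrt (x0^2 + 0^2 + 0^2) := Real.sqrt_pos.mpr (by positivity)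
    positivity
  have hdiv : HasDerivAt (fun s : ℝ => x0 / Real.sqrt (x0^2 + s^2 + 0^2) ^ 3)
      (((0:ℝ) * Real.sqrt (x0^2 + (0:ℝ)^2 + 0^2) ^ 3 - x0 * 0)
        / (Real.sqrt (x0^2 + (0:ℝ)^2 + 0^2) ^ 3)^2) 0 :=
    (hasDerivAt_const (0:ℝ) x0).div hc hg0
  have h3 := (hasDerivAt_const (0:ℝ) (lam2 μ * x0)).sub hdiv
  have he : (0:ℝ) - ((0:ℝ) * Real.sqrt (x0^2 + (0:ℝ)^2 + 0^2) ^ 3 - x0 * 0)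
        / (Real.sqrt (x0^2 + (0:ℝ)^2 + 0^2) ^ 3)^2 = 0 := by
    field_simp
    ring
  rw [he] at h3
  rw [Omegaxy, hfun]; exact h3.deriv

/-- For every `μ ∈ [0,1/2]` the equilibrium points `L₁ = (λ₂^{−1/3},0,0)` and
`L₂ = (−λ₂^{−1/3},0,0)` are of saddle × center type in the plane: there
`Ω_xx = 3λ₂`, `Ω_yy = λ₁ − λ₂`, `Ω_xy = 0`; moreover `B < 0`, `D > A² ≥ 0`, and the planar
characteristic polynomial `η⁴ − (2λ₂ + λ₁ − 4)η² + 3λ₂(λ₁ − λ₂)` has, over `ℂ`, exactly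
the roots `{Λ, −Λ, iω, −iω}` with `Λ, ω > 0`. -/
theorem L1_L2_saddle_center (μ : ℝ) (hμ : μ ∈ Set.Icc (0:ℝ) (1/2)) :
    Omegaxx μ (lam2 μ ^ (-(1:ℝ)/3)) 0 0 = 3 * lam2 μ ∧
    Omegayy μ (lam2 μ ^ (-(1:ℝ)/3)) 0 0 = lam1 μ - lam2 μ ∧
    Omegaxy μ (lam2 μ ^ (-(1:ℝ)/3)) 0 0 = 0 ∧
    Omegaxx μ (-(lam2 μ ^ (-(1:ℝ)/3))) 0 0 = 3 * lam2 μ ∧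
    Omegayy μ (-(lam2 μ ^ (-(1:ℝ)/3))) 0 0 = lam1 μ - lam2 μ ∧
    Omegaxy μ (-(lam2 μ ^ (-(1:ℝ)/3))) 0 0 = 0 ∧
    Bcoef μ < 0 ∧
    Dcoef μ > (Acoef μ)^2 ∧ (Acoef μ)^2 ≥ 0 ∧
    0 < LambdaL1 μ ∧ 0 < omegaL1 μ ∧
    {η : ℂ | η^4 - ((2 * lam2 μ + lam1 μ - 4 : ℝ) : ℂ) * η^2
        + ((3 * lam2 μ * (lam1 μ - lam2 μ) : ℝ) : ℂ) = 0}
      = {((LambdaL1 μ : ℝ) : ℂ), -((LambdaL1 μ : ℝ) : ℂ),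
         Complex.I * ((omegaL1 μ : ℝ) : ℂ), -(Complex.I * ((omegaL1 μ : ℝ) : ℂ))} := by
  -- basic bounds
  have hd : (1:ℝ)/2 ≤ dparam μ := by
    rw [dparam, show (1:ℝ)/2 = Real.sqrt ((1/2)^2) by
      rw [Real.sqrt_sq (by norm_num : (0:ℝ) ≤ 1/2)]]
    exact Real.sqrt_le_sqrt (by nlinarith [sq_nonneg (μ - 1/2)])
  have hlam2 : 0 < lam2 μ := by rw [lam2]; linarith
  have hdiff : lam1 μ - lam2 μ = -3 * dparam μ := by rw [lam1, lam2]; ring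
  have hB : Bcoef μ < 0 := by
    rw [Bcoef, hdiff]; nlinarith
  have hDgt : Dcoef μ > (Acoef μ)^2 := by rw [Dcoef]; linarith
  have hA2 : (0:ℝ) ≤ (Acoef μ)^2 := sq_nonneg _
  have hDpos : 0 < Dcoef μ := lt_of_le_of_lt hA2 hDgt
  have hsD : |Acoef μ| < Real.sqrt (Dcoef μ) := by
    have h := Real.sqrt_lt_sqrt (sq_nonneg (Acoef μ)) hDgt
    rwa [Real.sqrt_sq_eq_abs] at h
  have hL1 : 0 < (Real.sqrt (Dcoef μ) - Acoef μ) / 2 := by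
    have := le_abs_self (Acoef μ); linarith
  have hW1 : 0 < (Acoef μ + Real.sqrt (Dcoef μ)) / 2 := by
    have := neg_abs_le (Acoef μ); linarith
  have hLpos : 0 < LambdaL1 μ := Real.sqrt_pos.mpr hL1
  have hWpos : 0 < omegaL1 μ := Real.sqrt_pos.mpr hW1
  -- second derivatives at L1, L2
  set r := lam2 μ ^ (-(1:ℝ)/3) with hrdef
  have hrpos : 0 < r := Real.rpow_pos_of_pos hlam2 _
  have hr3 : r ^ 3 = (lam2 μ)⁻¹ := by
    rw [hrdef, ← Real.rpow_natCast (lam2 μ ^ (-(1:ℝ)/3)) 3, ← Real.rpow_mul hlam2.le]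
    norm_num [Real.rpow_neg_one]
  have hxx1 : Omegaxx μ r 0 0 = 3 * lam2 μ := by
    rw [omegaxx_pos μ r hrpos, hr3]
    field_simp
    ring
  have hxx2 : Omegaxx μ (-r) 0 0 = 3 * lam2 μ := by
    rw [omegaxx_neg μ r hrpos, hr3]
    field_simp
    ring
  have hsq3 : Real.sqrt (r^2 + 0^2 + 0^2) ^ 3 = (lam2 μ)⁻¹ := by
    rw [show r^2 + 0^2 + 0^2 = r^2 by ring, Real.sqrt_sq hrpos.le, hr3]
  have hsq3' : Real.sqrt ((-r)^2 + 0^2 + 0^2) ^ 3 = (lam2 μ)⁻¹ := by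
    rw [show (-r)^2 + 0^2 + 0^2 = r^2 by ring, Real.sqrt_sq hrpos.le, hr3]
  have hyy1 : Omegayy μ r 0 0 = lam1 μ - lam2 μ := by
    rw [omegayy_axis μ r hrpos.ne', hsq3, inv_inv]
  have hyy2 : Omegayy μ (-r) 0 0 = lam1 μ - lam2 μ := by
    rw [omegayy_axis μ (-r) (neg_ne_zero.mpr hrpos.ne'), hsq3', inv_inv]
  have hxy1 : Omegaxy μ r 0 0 = 0 := omegaxy_axis μ r hrpos.ne'
  have hxy2 : Omegaxy μ (-r) 0 0 = 0 := omegaxy_axis μ (-r) (neg_ne_zero.mpr hrpos.ne')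
  -- roots of the characteristic polynomial
  have hLsq : LambdaL1 μ ^ 2 = (Real.sqrt (Dcoef μ) - Acoef μ) / 2 :=
    Real.sq_sqrt hL1.le
  have hWsq : omegaL1 μ ^ 2 = (Acoef μ + Real.sqrt (Dcoef μ)) / 2 :=
    Real.sq_sqrt hW1.le
  have hDsq : Real.sqrt (Dcoef μ) ^ 2 = Dcoef μ := Real.sq_sqrt hDpos.le
  have e1 : omegaL1 μ ^ 2 - LambdaL1 μ ^ 2 = 4 - 2 * lam2 μ - lam1 μ := by
    rw [hLsq, hWsq]; rw [Acoef]; ring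
  have e2 : LambdaL1 μ ^ 2 * omegaL1 μ ^ 2 = -(3 * lam2 μ * (lam1 μ - lam2 μ)) := by
    rw [hLsq, hWsq]
    have h9 : Real.sqrt (Dcoef μ) ^ 2 = (Acoef μ)^2 - 4 * (3 * lam2 μ * (lam1 μ - lam2 μ)) := by
      rw [hDsq, Dcoef, Bcoef]
    linear_combination h9 / 4
  have ce1 : ((omegaL1 μ : ℝ) : ℂ)^2 - ((LambdaL1 μ : ℝ) : ℂ)^2
      = 4 - 2 * (lam2 μ : ℂ) - (lam1 μ : ℂ) := by exact_mod_cast e1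
  have ce2 : ((LambdaL1 μ : ℝ) : ℂ)^2 * ((omegaL1 μ : ℝ) : ℂ)^2
      = -(3 * (lam2 μ : ℂ) * ((lam1 μ : ℂ) - (lam2 μ : ℂ))) := by exact_mod_cast e2
  have hfact : ∀ η : ℂ,
      η^4 - ((2 * lam2 μ + lam1 μ - 4 : ℝ) : ℂ) * η^2
        + ((3 * lam2 μ * (lam1 μ - lam2 μ) : ℝ) : ℂ)
      = (η - ((LambdaL1 μ : ℝ) : ℂ)) * (η + ((LambdaL1 μ : ℝ) : ℂ))
        * (η - Complex.I * ((omegaL1 μ : ℝ) : ℂ)) * (η + Complex.I * ((omegaL1 μ : ℝ) : ℂ)) := by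
    intro η
    push_cast
    linear_combination (-η^2) * ce1 + ce2
      + (((omegaL1 μ : ℝ) : ℂ)^2 * η^2 - ((LambdaL1 μ : ℝ) : ℂ)^2 * ((omegaL1 μ : ℝ) : ℂ)^2)
        * Complex.I_sq
  have hset : {η : ℂ | η^4 - ((2 * lam2 μ + lam1 μ - 4 : ℝ) : ℂ) * η^2
        + ((3 * lam2 μ * (lam1 μ - lam2 μ) : ℝ) : ℂ) = 0}
      = {((LambdaL1 μ : ℝ) : ℂ), -((LambdaL1 μ : ℝ) : ℂ),
         Complex.I * ((omegaL1 μ : ℝ) : ℂ), -(Complex.I * ((omegaL1 μ : ℝ) : ℂ))} := by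
    ext η
    simp only [Set.mem_setOf_eq, Set.mem_insert_iff, Set.mem_singleton_iff]
    rw [hfact η, mul_eq_zero, mul_eq_zero, mul_eq_zero, sub_eq_zero, sub_eq_zero,
      add_eq_zero_iff_eq_neg, add_eq_zero_iff_eq_neg]
    tauto
  exact ⟨hxx1, hyy1, hxy1, hxx2, hyy2, hxy2, hB, hDgt, hA2, hLpos, hWpos, hset⟩

end
end
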